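/- arXiv:2302.03451 — 3 statements merged into one kernel-verified Lean document; each statement's English description precedes it below -/
import Mathlib

section
/- A finite metric space (S,d) admits a 2-solidarity-r-cover (i.e., a partition of S into two disjoint subsets each of which is an r-cover) if and only if every point of S has a neighbor: for all s in S there exists s' in S with s' ≠ s and d(s,s') ≤ r. -/
def IsCover {α : Type*} [MetricSpace α] (r : ℝ) (T : Set α) : Prop :=
  ∀ s : α, ∃ t ∈ T, dist s t ≤ r

theorem stmt_0 {α : Type*} [MetricSpace α] [Fintype α] [Nonempty α] (r : ℝ) (hr : 0 ≤ r) :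
    (∃ S₁ S₂ : Set α, Disjoint S₁ S₂ ∧ IsCover r S₁ ∧ IsCover r S₂) ↔
      ∀ s : α, ∃ s' : α, s' ≠ s ∧ dist s s' ≤ r := by
  classical
  constructor
  · rintro ⟨S₁, S₂, hd, h1, h2⟩ s
    obtain ⟨t, ht1, htd⟩ := h1 s
    by_cases hts : t = s
    · obtain ⟨u, hu2, hud⟩ := h2 s
      refine ⟨u, ?_, hud⟩
      rintro rfl
      exact (hd.ne_of_mem ht1 hu2) hts
    · exact ⟨t, hts, htd⟩
  · intro h
    set P : Finset α → Prop := fun A => ∀ a ∈ A, ∃ b, b ∉ A ∧ b ≠ a ∧ dist a b ≤ r with hP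
    have h𝒜 : (Finset.univ.filter P).Nonempty := ⟨∅, by simp [P]⟩
    obtain ⟨A, hA, hmax⟩ : ∃ A ∈ Finset.univ.filter P, ∀ x ∈ Finset.univ.filter P, ¬ A < x := by
      obtain ⟨A, hA⟩ := Finset.exists_maximal h𝒜
      exact ⟨A, hA.1, fun x hx hlt => lt_irrefl _ (lt_of_lt_of_le hlt (hA.2 hx hlt.le))⟩
    rw [Finset.mem_filter] at hA
    have hPA : P A := hA.2
    refine ⟨↑A, (↑A : Set α)ᶜ, disjoint_compl_right, ?_, ?_⟩
    · intro s
      by_cases hs : s ∈ A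
      · exact ⟨s, hs, by simp [hr]⟩
      · have hlt : A < insert s A := Finset.ssubset_insert hs
        have hnP : ¬ P (insert s A) := fun hPB =>
          hmax _ (Finset.mem_filter.mpr ⟨Finset.mem_univ _, hPB⟩) hlt
        simp only [hP] at hnP
        push_neg at hnP
        obtain ⟨a, ha, hcontra⟩ := hnP
        rcases Finset.mem_insert.mp ha with rfl | haA
        · obtain ⟨s', hne, hdist⟩ := h a
          have hs' : s' ∈ insert a A := by
            by_contra hs'n
            exact absurd hdist (not_le.mpr (hcontra s' hs'n hne))
          rcases Finset.mem_insert.mp hs' with rfl | hs'A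
          · exact absurd rfl hne
          · exact ⟨s', hs'A, hdist⟩
        · obtain ⟨b, hbA, hbne, hbd⟩ := hPA a haA
          have hb : b ∈ insert s A := by
            by_contra hbn
            exact absurd hbd (not_le.mpr (hcontra b hbn hbne))
          rcases Finset.mem_insert.mp hb with rfl | hbA'
          · exact ⟨a, haA, by rwa [dist_comm]⟩
          · exact absurd hbA' hbA
    · intro s
      by_cases hs : s ∈ A
      · obtain ⟨b, hbA, _, hbd⟩ := hPA s hs
        exact ⟨b, by simpa using hbA, hbd⟩
      · exact ⟨s, by simpa using hs, by simp [hr]⟩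
end

section
/- Let (S,d) be a finite metric space, r > 0, and let P = {p₁,…,pₖ} ⊆ S with pairwise distances > 2r such that every point of S is within distance 2r of P. If |B_r(pᵢ)| ≥ m for every i, then S admits an m-solidarity-3r-cover: there exist m pairwise disjoint subsets S₁,…,S_m of S, each a 3r-cover of S. -/
theorem stmt_6 {α : Type*} [MetricSpace α] [Fintype α] (r : ℝ) (hr : 0 < r) (m k : ℕ)
    (p : Fin k → α)
    (hsep : ∀ i j : Fin k, i ≠ j → 2 * r < dist (p i) (p j))
    (hcov : ∀ s : α, ∃ i : Fin k, dist s (p i) ≤ 2 * r)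
    (hball : ∀ i : Fin k, m ≤ (Metric.closedBall (p i) r).ncard) :
    ∃ F : Fin m → Set α, Pairwise (Function.onFun Disjoint F) ∧ ∀ i, IsCover (3 * r) (F i) := by
  classical
  set t : Fin k → Finset α := fun i => (Metric.closedBall (p i) r).toFinset with ht
  have hcard : ∀ i, m ≤ (t i).card := by
    intro i
    have := hball i
    rwa [Set.ncard_eq_toFinset_card'] at this
  set g : Fin k → Fin m → α := fun i j => ((t i).equivFin.symm (Fin.castLE (hcard i) j) : α)
    with hg
  have hmem : ∀ i j, g i j ∈ Metric.closedBall (p i) r := by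
    intro i j
    have : g i j ∈ t i := Finset.coe_mem _
    simpa [ht, Set.mem_toFinset] using this
  have hinj : ∀ i, Function.Injective (g i) := by
    intro i j j' h
    have := Subtype.coe_injective h
    have := (t i).equivFin.symm.injective this
    exact Fin.castLE_injective _ this
  -- balls are disjoint: if g i j = g i' j' with i ≠ i', contradiction
  have hball_disj : ∀ i i' j j', g i j = g i' j' → i = i' := by
    intro i i' j j' h
    by_contra hne
    have h1 := hmem i j
    have h2 := hmem i' j'
    rw [h] at h1
    have : dist (p i) (p i') ≤ 2 * r := by
      calc dist (p i) (p i') ≤ dist (p i) (g i' j') + dist (g i' j') (p i') :=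
            dist_triangle _ _ _
        _ ≤ r + r := by
            refine add_le_add ?_ ?_
            · rw [dist_comm]; exact Metric.mem_closedBall.mp h1
            · exact Metric.mem_closedBall.mp h2
        _ = 2 * r := by ring
    exact absurd this (not_le.mpr (hsep i i' hne))
  refine ⟨fun j => Set.range (fun i => g i j), ?_, ?_⟩
  · intro j j' hjj'
    rw [Function.onFun, Set.disjoint_left]
    rintro x ⟨i, rfl⟩ ⟨i', hx⟩
    have hii' : i' = i := hball_disj i' i j' j hx
    subst hii'
    exact hjj' ((hinj i' hx).symm)
  · intro j s
    obtain ⟨i, hi⟩ := hcov s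
    refine ⟨g i j, ⟨i, rfl⟩, ?_⟩
    calc dist s (g i j) ≤ dist s (p i) + dist (p i) (g i j) := dist_triangle _ _ _
      _ ≤ 2 * r + r := by
          refine add_le_add hi ?_
          rw [dist_comm]; exact Metric.mem_closedBall.mp (hmem i j)
      _ = 3 * r := by ring
end

section
/- In the plane divided into an axis-aligned grid of squares of side length r/√2 (diameter r), any closed disc of radius r intersects at most 16 grid squares. -/
/-- The half-open grid square indexed by `q : ℤ × ℤ` with side length `s`. -/
def gridSq (s : ℝ) (q : ℤ × ℤ) : Set (EuclideanSpace ℝ (Fin 2)) :=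
  {x | x 0 ∈ Set.Ico (q.1 * s) ((q.1 + 1) * s) ∧ x 1 ∈ Set.Ico (q.2 * s) ((q.2 + 1) * s)}

lemma coord_dist_le (x c : EuclideanSpace ℝ (Fin 2)) (i : Fin 2) :
    dist (x i) (c i) ≤ dist x c := by
  rw [EuclideanSpace.dist_eq]
  have h1 : dist (x i) (c i) ^ 2 ≤ ∑ j, dist (x j) (c j) ^ 2 :=
    Finset.single_le_sum (f := fun j => dist (x j) (c j) ^ 2)
      (fun j _ => by positivity) (Finset.mem_univ i)
  calc dist (x i) (c i) = Real.sqrt (dist (x i) (c i) ^ 2) := by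
        rw [Real.sqrt_sq dist_nonneg]
    _ ≤ _ := Real.sqrt_le_sqrt h1

theorem stmt_9 (r : ℝ) (hr : 0 < r) (c : EuclideanSpace ℝ (Fin 2)) :
    {q : ℤ × ℤ | (gridSq (r / Real.sqrt 2) q ∩ Metric.closedBall c r).Nonempty}.ncard ≤ 16 := by
  set s : ℝ := r / Real.sqrt 2 with hs
  have h2 : (0:ℝ) < Real.sqrt 2 := Real.sqrt_pos.mpr (by norm_num)
  have hs0 : 0 < s := div_pos hr h2
  set a0 : ℤ := ⌊(c 0 - r)/s⌋ with ha0
  set b0 : ℤ := ⌊(c 0 + r)/s⌋ with hb0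
  set a1 : ℤ := ⌊(c 1 - r)/s⌋ with ha1
  set b1 : ℤ := ⌊(c 1 + r)/s⌋ with hb1
  have hkey : ∀ (t : ℝ) (k : ℤ) (u : ℝ), k * s ≤ u → u < (k+1) * s → t - r ≤ u → u ≤ t + r →
      ⌊(t - r)/s⌋ ≤ k ∧ k ≤ ⌊(t + r)/s⌋ := by
    intro t k u h1 h2' h3 h4
    have hk : k = ⌊u / s⌋ := by
      symm
      rw [Int.floor_eq_iff]
      constructor
      · exact (le_div_iff₀ hs0).mpr (by push_cast; linarith)
      · rw [div_lt_iff₀ hs0]; push_cast; linarith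
    constructor
    · rw [hk]; exact Int.floor_le_floor (by apply div_le_div_of_nonneg_right h3 hs0.le)
    · rw [hk]; exact Int.floor_le_floor (by apply div_le_div_of_nonneg_right h4 hs0.le)
  have hsub : {q : ℤ × ℤ | (gridSq s q ∩ Metric.closedBall c r).Nonempty} ⊆
      ↑(Finset.Icc a0 b0 ×ˢ Finset.Icc a1 b1) := by
    rintro q ⟨x, ⟨hx0, hx1⟩, hxc⟩
    have hd : dist x c ≤ r := Metric.mem_closedBall.mp hxc
    have hd0 : dist (x 0) (c 0) ≤ r := (coord_dist_le x c 0).trans hd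
    have hd1 : dist (x 1) (c 1) ≤ r := (coord_dist_le x c 1).trans hd
    rw [Real.dist_eq, abs_le] at hd0 hd1
    have h0 := hkey (c 0) q.1 (x 0) hx0.1 hx0.2 (by linarith [hd0.1]) (by linarith [hd0.2])
    have h1 := hkey (c 1) q.2 (x 1) hx1.1 hx1.2 (by linarith [hd1.1]) (by linarith [hd1.2])
    simp only [Finset.coe_product, Set.mem_prod, Finset.mem_coe, Finset.mem_Icc]
    exact ⟨⟨h0.1, h0.2⟩, ⟨h1.1, h1.2⟩⟩
  have hgap : ∀ t : ℝ, ⌊(t + r)/s⌋ ≤ ⌊(t - r)/s⌋ + 3 := by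
    intro t
    have hsqrt2 : Real.sqrt 2 < 3/2 := by
      rw [show (3:ℝ)/2 = Real.sqrt ((3/2)^2) by rw [Real.sqrt_sq]; norm_num]
      apply Real.sqrt_lt_sqrt (by norm_num) (by norm_num)
    have hrs : 2 * r / s = 2 * Real.sqrt 2 := by
      rw [hs]; field_simp
    have h1 : ((⌊(t + r)/s⌋ : ℝ)) ≤ (t + r)/s := Int.floor_le _
    have h2' : (t - r)/s < ⌊(t - r)/s⌋ + 1 := Int.lt_floor_add_one _
    have hdiff : (t + r)/s - (t - r)/s = 2 * Real.sqrt 2 := by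
      rw [div_sub_div_same]
      rw [show t + r - (t - r) = 2 * r by ring]
      rw [← hrs]
    have : ((⌊(t + r)/s⌋ : ℝ)) < ⌊(t - r)/s⌋ + 4 := by nlinarith
    have : ⌊(t + r)/s⌋ < ⌊(t - r)/s⌋ + 4 := by exact_mod_cast this
    omega
  have hc0 : b0 ≤ a0 + 3 := hgap (c 0)
  have hc1 : b1 ≤ a1 + 3 := hgap (c 1)
  calc {q : ℤ × ℤ | (gridSq s q ∩ Metric.closedBall c r).Nonempty}.ncard
      ≤ (↑(Finset.Icc a0 b0 ×ˢ Finset.Icc a1 b1) : Set (ℤ × ℤ)).ncard :=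
        Set.ncard_le_ncard hsub (Finset.Icc a0 b0 ×ˢ Finset.Icc a1 b1).finite_toSet
    _ = (Finset.Icc a0 b0 ×ˢ Finset.Icc a1 b1).card := Set.ncard_coe_finset _
    _ = (Finset.Icc a0 b0).card * (Finset.Icc a1 b1).card := Finset.card_product _ _
    _ ≤ 4 * 4 := by
        apply Nat.mul_le_mul <;> rw [Int.card_Icc] <;> omega
    _ = 16 := by norm_num
end
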